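/- As formal power series in q, the generating function for σ_d maex(n), the sum of maximal excludants over distinct-parts partitions of n, satisfies Σ_{n≥0} σ_d maex(n) q^n = Σ_{k≥1} k · (−q; q)_{k−1} · Σ_{m≥1} q^{m(m+1)/2 + km}. -/

import Mathlib

open PowerSeries Finset

/-- The set of partitions of `n` into distinct parts, encoded as finsets of
positive integers summing to `n`. -/
def Dpart (n : ℕ) : Finset (Finset ℕ) :=
  (Finset.Icc 1 n).powerset.filter (fun S => S.sum id = n)

/-- The maximal excludant: the largest nonnegative integer smaller than the largest
part that does not occur as a part (`0` for the empty partition). -/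
noncomputable def pmaex (S : Finset ℕ) : ℕ := sSup {m : ℕ | m < S.sup id ∧ m ∉ S}

/-- The sum of maximal excludants over all distinct-parts partitions of `n`. -/
noncomputable def sigmadmaex (n : ℕ) : ℕ := ∑ S ∈ Dpart n, pmaex S

/-- `Σ_{k ≥ 1} k (−q;q)_{k−1} Σ_{m ≥ 1} q^{m(m+1)/2 + km}` as a formal power series
over `ℚ` (the term of indices `k, m` has order `m(m+1)/2 + km ≥ k + m`). -/
noncomputable def maexSeries : PowerSeries ℚ :=
  PowerSeries.mk fun N =>
    coeff N (∑ k ∈ Finset.Icc 1 (N + 1), (k : PowerSeries ℚ) *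
      (∏ j ∈ Finset.range (k - 1), (1 + (X : PowerSeries ℚ) ^ (j + 1))) *
      ∑ m ∈ Finset.Icc 1 (N + 1), (X : PowerSeries ℚ) ^ (m * (m + 1) / 2 + k * m))

/-- `Σ_{n≥0} σ_d maex(n) q^n = Σ_{k≥1} k (−q;q)_{k−1} Σ_{m≥1} q^{m(m+1)/2+km}`. -/

-- gauss-type sum
lemma sum_Icc_shift (k m : ℕ) : ∑ i ∈ Finset.Icc (k+1) (k+m), i = m*(m+1)/2 + k*m := by
  induction m with
  | zero => simp
  | succ m ih =>
      have h1 : k + (m+1) = (k+m) + 1 := by ring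
      rw [h1, Finset.sum_Icc_succ_top (by omega), ih]
      have h2 : 2 ∣ m*(m+1) := (Nat.even_mul_succ_self m).two_dvd
      have h3 : 2 ∣ (m+1)*(m+2) := (Nat.even_mul_succ_self (m+1)).two_dvd
      have h4 : (m+1)*(m+1+1) = m*(m+1) + 2*(m+1) := by ring
      have h5 : k*(m+1) = k*m + k := by ring
      omega

lemma prod_range_shift {M : Type*} [CommMonoid M] (f : ℕ → M) (n : ℕ) :
    ∏ j ∈ Finset.range n, f (j+1) = ∏ j ∈ Finset.Icc 1 n, f j := by
  induction n with
  | zero => simp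
  | succ n ih => rw [Finset.prod_range_succ, ih, Finset.prod_Icc_succ_top (by omega)]

lemma pmaex_eq (S : Finset ℕ) (k : ℕ) (hk1 : k ∉ S) (hk2 : k < S.sup id)
    (hk3 : ∀ j, k < j → j < S.sup id → j ∈ S) : pmaex S = k := by
  have hg : IsGreatest {m : ℕ | m < S.sup id ∧ m ∉ S} k := by
    refine ⟨⟨hk2, hk1⟩, fun x hx => ?_⟩
    by_contra h
    push_neg at h
    exact hx.2 (hk3 x h hx.1)
  exact hg.csSup_eq

lemma pmaex_spec (S : Finset ℕ) (hk : 1 ≤ pmaex S) :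
    pmaex S < S.sup id ∧ pmaex S ∉ S ∧
      ∀ j, pmaex S < j → j < S.sup id → j ∈ S := by
  set s : Set ℕ := {m : ℕ | m < S.sup id ∧ m ∉ S} with hs
  have hbdd : BddAbove s := ⟨S.sup id, fun x hx => le_of_lt hx.1⟩
  have hne : s.Nonempty := by
    by_contra h
    rw [Set.not_nonempty_iff_eq_empty] at h
    have : pmaex S = 0 := by rw [pmaex, ← hs, h]; simp
    omega
  have hmem : pmaex S ∈ s := Nat.sSup_mem hne hbdd
  refine ⟨hmem.1, hmem.2, fun j hj1 hj2 => ?_⟩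
  by_contra h
  have : j ≤ pmaex S := le_csSup hbdd ⟨hj2, h⟩
  omega

section structural
variable {k m : ℕ} {T : Finset ℕ}

lemma union_disj (hk : 1 ≤ k) (hT : T ⊆ Finset.Icc 1 (k-1)) :
    Disjoint T (Finset.Icc (k+1) (k+m)) := by
  rw [Finset.disjoint_left]
  intro a haT haI
  have h1 := hT haT
  simp only [Finset.mem_Icc] at h1 haI
  omega

lemma union_sup (hk : 1 ≤ k) (hm : 1 ≤ m) (hT : T ⊆ Finset.Icc 1 (k-1)) :
    (T ∪ Finset.Icc (k+1) (k+m)).sup id = k + m := by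
  apply le_antisymm
  · apply Finset.sup_le
    intro b hb
    rcases Finset.mem_union.1 hb with h | h
    · have := hT h; simp only [Finset.mem_Icc] at this; simp [id]; omega
    · simp only [Finset.mem_Icc] at h; simpa [id] using h.2
  · exact Finset.le_sup (f := id) (Finset.mem_union_right _ (by simp only [Finset.mem_Icc]; omega))

lemma union_pmaex (hk : 1 ≤ k) (hm : 1 ≤ m) (hT : T ⊆ Finset.Icc 1 (k-1)) :
    pmaex (T ∪ Finset.Icc (k+1) (k+m)) = k := by
  apply pmaex_eq
  · intro h
    rcases Finset.mem_union.1 h with h | h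
    · have := hT h; simp only [Finset.mem_Icc] at this; omega
    · simp only [Finset.mem_Icc] at h; omega
  · rw [union_sup hk hm hT]; omega
  · intro j hj1 hj2
    rw [union_sup hk hm hT] at hj2
    exact Finset.mem_union_right _ (by simp only [Finset.mem_Icc]; omega)

lemma union_sum (hk : 1 ≤ k) (hT : T ⊆ Finset.Icc 1 (k-1)) :
    (T ∪ Finset.Icc (k+1) (k+m)).sum id = T.sum id + (m*(m+1)/2 + k*m) := by
  rw [Finset.sum_union (union_disj hk hT)]
  congr 1
  simpa using sum_Icc_shift k m

lemma union_inter (hk : 1 ≤ k) (hT : T ⊆ Finset.Icc 1 (k-1)) :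
    (T ∪ Finset.Icc (k+1) (k+m)) ∩ Finset.Icc 1 (k-1) = T := by
  ext x
  simp only [Finset.mem_inter, Finset.mem_union, Finset.mem_Icc]
  constructor
  · rintro ⟨h | h, hx⟩
    · exact h
    · omega
  · intro hx
    have := hT hx; simp only [Finset.mem_Icc] at this
    exact ⟨Or.inl hx, this⟩

lemma forward_decomp {π : Finset ℕ} {N : ℕ} (hsub : π ⊆ Finset.Icc 1 N)
    (hk : 1 ≤ pmaex π) :
    π = (π ∩ Finset.Icc 1 (pmaex π - 1)) ∪
        Finset.Icc (pmaex π + 1) (π.sup id) ∧ pmaex π < π.sup id ∧ π.sup id ∈ π := by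
  obtain ⟨h1, h2, h3⟩ := pmaex_spec π hk
  have hne : π.Nonempty := by
    rcases Finset.eq_empty_or_nonempty π with h | h
    · exfalso; rw [h] at h1; simp at h1
    · exact h
  have hsupmem : π.sup id ∈ π := by
    obtain ⟨i, hi, hii⟩ := Finset.exists_mem_eq_sup π hne id
    rwa [hii]
  refine ⟨?_, h1, hsupmem⟩
  ext x
  simp only [Finset.mem_union, Finset.mem_inter, Finset.mem_Icc]
  constructor
  · intro hx
    have hx1 : 1 ≤ x := by have := hsub hx; simp only [Finset.mem_Icc] at this; exact this.1
    have hxle : x ≤ π.sup id := Finset.le_sup (f := id) hx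
    rcases lt_trichotomy x (pmaex π) with h | h | h
    · exact Or.inl ⟨hx, hx1, by omega⟩
    · exact absurd (h ▸ hx) h2
    · exact Or.inr ⟨by omega, hxle⟩
  · rintro (⟨hx, _⟩ | ⟨ha, hb⟩)
    · exact hx
    · rcases eq_or_lt_of_le hb with h | h
      · exact h ▸ hsupmem
      · exact h3 x (by omega) h

end structural

noncomputable def Q (N : ℕ) : Finset (ℕ × Finset ℕ × ℕ) :=
  ((Finset.Icc 1 (N+1)) ×ˢ (((Finset.Icc 1 N).powerset) ×ˢ (Finset.Icc 1 (N+1)))).filter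
    (fun p => p.2.1 ⊆ Finset.Icc 1 (p.1 - 1) ∧
      p.2.1.sum id + (p.2.2*(p.2.2+1)/2 + p.1*p.2.2) = N)

lemma claimA (N : ℕ) : ∑ S ∈ Dpart N, pmaex S = ∑ p ∈ Q N, p.1 := by
  rw [← Finset.sum_filter_of_ne (p := fun S => 1 ≤ pmaex S) (fun x _ h => by omega)]
  apply Finset.sum_nbij'
    (i := fun π => (pmaex π, (π ∩ Finset.Icc 1 (pmaex π - 1), π.sup id - pmaex π)))
    (j := fun p => p.2.1 ∪ Finset.Icc (p.1+1) (p.1 + p.2.2))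
  · -- forward membership
    intro π hπ
    simp only [Finset.mem_filter, Dpart, Finset.mem_powerset] at hπ
    obtain ⟨⟨hsub, hsum⟩, hk⟩ := hπ
    obtain ⟨hdec, hlt, hsupmem⟩ := forward_decomp hsub hk
    set k := pmaex π with hkdef
    set L := π.sup id with hLdef
    have hLN : L ≤ N := by
      have := hsub hsupmem; simp only [Finset.mem_Icc] at this; exact this.2
    have hLk : L = k + (L - k) := by omega
    have hTsub : π ∩ Finset.Icc 1 (k-1) ⊆ Finset.Icc 1 (k-1) := Finset.inter_subset_right
    have hsum2 : (π ∩ Finset.Icc 1 (k-1)).sum id +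
        ((L-k)*((L-k)+1)/2 + k*(L-k)) = N := by
      rw [← hsum]
      conv_rhs => rw [hdec, hLk]
      rw [union_sum hk hTsub]
    simp only [Q, Finset.mem_filter, Finset.mem_product, Finset.mem_powerset, Finset.mem_Icc]
    refine ⟨⟨⟨hk, by omega⟩, ⟨?_, by omega, by omega⟩⟩, hTsub, hsum2⟩
    exact Finset.inter_subset_left.trans hsub
  · -- backward membership
    rintro ⟨k, T, m⟩ hp
    simp only [Q, Finset.mem_filter, Finset.mem_product, Finset.mem_powerset,
      Finset.mem_Icc] at hp
    obtain ⟨⟨⟨hk1, _⟩, _, hm1, _⟩, hT, hsum⟩ := hp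
    have hsum' : (T ∪ Finset.Icc (k+1) (k+m)).sum id = N := by
      rw [union_sum hk1 hT]; exact hsum
    simp only [Finset.mem_filter, Dpart, Finset.mem_powerset]
    refine ⟨⟨?_, hsum'⟩, ?_⟩
    · intro x hx
      simp only [Finset.mem_Icc]
      constructor
      · rcases Finset.mem_union.1 hx with h | h
        · have := hT h; simp only [Finset.mem_Icc] at this; exact this.1
        · simp only [Finset.mem_Icc] at h; omega
      · calc x = id x := rfl
          _ ≤ (T ∪ Finset.Icc (k+1) (k+m)).sum id :=
              Finset.single_le_sum (fun i _ => Nat.zero_le _) hx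
          _ = N := hsum'
    · rw [union_pmaex hk1 hm1 hT]; exact hk1
  · -- left inverse
    intro π hπ
    simp only [Finset.mem_filter, Dpart, Finset.mem_powerset] at hπ
    obtain ⟨⟨hsub, _⟩, hk⟩ := hπ
    obtain ⟨hdec, hlt, _⟩ := forward_decomp hsub hk
    simp only
    have he : pmaex π + (π.sup id - pmaex π) = π.sup id := by omega
    rw [he]
    exact hdec.symm
  · -- right inverse
    rintro ⟨k, T, m⟩ hp
    simp only [Q, Finset.mem_filter, Finset.mem_product, Finset.mem_powerset,
      Finset.mem_Icc] at hp
    obtain ⟨⟨⟨hk1, _⟩, _, hm1, _⟩, hT, _⟩ := hp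
    simp only [union_pmaex hk1 hm1 hT, union_sup hk1 hm1 hT, union_inter hk1 (m := m) hT,
      Prod.mk.injEq]
    refine ⟨trivial, trivial, by omega⟩
  · intro π _
    rfl

lemma prodexp (k : ℕ) : (∏ j ∈ Finset.range (k-1), (1 + (X:PowerSeries ℚ)^(j+1))) =
    ∑ T ∈ (Finset.Icc 1 (k-1)).powerset, (X:PowerSeries ℚ)^(T.sum id) := by
  rw [prod_range_shift (fun j => 1 + (X:PowerSeries ℚ)^j) (k-1)]
  rw [Finset.prod_congr rfl fun j _ => add_comm 1 ((X:PowerSeries ℚ)^j), Finset.prod_add]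
  apply Finset.sum_congr rfl
  intro T hT
  rw [Finset.prod_pow_eq_pow_sum]
  simp [id]

lemma powfilter {k N : ℕ} (h : k - 1 ≤ N) :
    (Finset.Icc 1 N).powerset.filter (fun T => T ⊆ Finset.Icc 1 (k-1)) =
      (Finset.Icc 1 (k-1)).powerset := by
  ext T
  simp only [Finset.mem_filter, Finset.mem_powerset]
  constructor
  · exact fun h => h.2
  · intro hT
    exact ⟨hT.trans (Finset.Icc_subset_Icc le_rfl h), hT⟩

lemma claimB (N : ℕ) :
    coeff N (∑ k ∈ Finset.Icc 1 (N + 1), (k : PowerSeries ℚ) *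
      (∏ j ∈ Finset.range (k - 1), (1 + (X : PowerSeries ℚ) ^ (j + 1))) *
      ∑ m ∈ Finset.Icc 1 (N + 1), (X : PowerSeries ℚ) ^ (m * (m + 1) / 2 + k * m)) =
    ∑ p ∈ Q N, (p.1 : ℚ) := by
  have lhs_eq : coeff N (∑ k ∈ Finset.Icc 1 (N + 1), (k : PowerSeries ℚ) *
      (∏ j ∈ Finset.range (k - 1), (1 + (X : PowerSeries ℚ) ^ (j + 1))) *
      ∑ m ∈ Finset.Icc 1 (N + 1), (X : PowerSeries ℚ) ^ (m * (m + 1) / 2 + k * m)) =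
      ∑ k ∈ Finset.Icc 1 (N+1), ∑ T ∈ (Finset.Icc 1 (k-1)).powerset,
        ∑ m ∈ Finset.Icc 1 (N+1),
          (if T.sum id + (m*(m+1)/2 + k*m) = N then (k:ℚ) else 0) := by
    rw [map_sum]
    apply Finset.sum_congr rfl
    intro k hk
    rw [prodexp, mul_assoc, Finset.sum_mul_sum, Finset.mul_sum, map_sum]
    apply Finset.sum_congr rfl
    intro T hT
    rw [Finset.mul_sum, map_sum]
    apply Finset.sum_congr rfl
    intro m hm
    rw [← pow_add, ← map_natCast (C (R := ℚ)) k, coeff_C_mul, coeff_X_pow]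
    by_cases h : T.sum id + (m*(m+1)/2 + k*m) = N
    · rw [if_pos h, if_pos h.symm, mul_one]
    · rw [if_neg h, if_neg (fun hh => h hh.symm), mul_zero]
  rw [lhs_eq, Q, Finset.sum_filter, Finset.sum_product]
  apply Finset.sum_congr rfl
  intro k hk
  simp only [Finset.mem_Icc] at hk
  rw [Finset.sum_product]
  rw [← powfilter (k := k) (N := N) (by omega), Finset.sum_filter]
  apply Finset.sum_congr rfl
  intro T hT
  dsimp only
  by_cases hTs : T ⊆ Finset.Icc 1 (k-1)
  · rw [if_pos hTs]
    apply Finset.sum_congr rfl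
    intro m hm
    simp [hTs]
  · rw [if_neg hTs]
    symm
    apply Finset.sum_eq_zero
    intro m hm
    simp [hTs]

theorem stmt_12 : (PowerSeries.mk fun n => (sigmadmaex n : ℚ)) = maexSeries := by
  ext N
  rw [PowerSeries.coeff_mk, maexSeries, PowerSeries.coeff_mk, claimB]
  rw [show sigmadmaex N = ∑ p ∈ Q N, p.1 from claimA N]
  push_cast
  rfl
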